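/- The series ∑_{k=1}^∞ (1/(2k+1)²) · C(2k,k)/4^k equals (π/2)·ln(2) − 1. -/

import Mathlib

open scoped BigOperators
open Real

noncomputable def cb (k : ℕ) : ℝ := (Nat.choose (2*k) k : ℝ) / 4^k

noncomputable def H (k : ℕ) : ℝ := ∑ j ∈ Finset.range k, (1:ℝ)/(j+1)

noncomputable def oh (k : ℕ) : ℝ := ∑ j ∈ Finset.range k, (1:ℝ)/(2*j+1)

open Set MeasureTheory Filter Topology intervalIntegral




lemma cb_pos (k : ℕ) : 0 < cb k := by
  have : 0 < Nat.choose (2*k) k := Nat.choose_pos (by omega)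
  unfold cb
  positivity

lemma cb_zero : cb 0 = 1 := by simp [cb]

lemma cb_rec (k : ℕ) : (2*(k:ℝ)+2) * cb (k+1) = (2*k+1) * cb k := by
  have h := Nat.succ_mul_centralBinom_succ k
  have h' : ((k:ℝ)+1) * (Nat.choose (2*(k+1)) (k+1) : ℝ) = 2*(2*k+1) * (Nat.choose (2*k) k : ℝ) := by
    have := congrArg (Nat.cast (R := ℝ)) h
    push_cast [Nat.centralBinom] at this
    push_cast
    convert this using 2 <;> ring_nf
  unfold cb
  have h4 : (4:ℝ)^(k+1) = 4 * 4^k := by ring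
  field_simp [h4]
  have h4k : (0:ℝ) < 4^k := by positivity
  rw [h4]; linear_combination (2 * (4:ℝ)^k) * h'

lemma cb_le_one (k : ℕ) : cb k ≤ 1 := by
  induction k with
  | zero => simp [cb]
  | succ n ih =>
    have hrec := cb_rec n
    have hp := cb_pos n
    nlinarith




noncomputable def f (x : ℝ) : ℝ := ∑' k, cb k * x^k

lemma summable_f {x : ℝ} (hx : |x| < 1) : Summable (fun k => cb k * x^k) := by
  apply Summable.of_norm
  apply Summable.of_nonneg_of_le (fun k => norm_nonneg _) (fun k => ?_)
    (summable_geometric_of_lt_one (abs_nonneg x) hx)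
  rw [norm_mul, norm_pow]
  calc ‖cb k‖ * ‖x‖^k ≤ 1 * |x|^k := by
        apply mul_le_mul _ le_rfl (by positivity) zero_le_one
        rw [Real.norm_eq_abs, abs_of_pos (cb_pos k)]; exact cb_le_one k
    _ = |x|^k := one_mul _

lemma summable_kr {r : ℝ} (h0 : 0 < r) (h1 : r < 1) :
    Summable (fun k : ℕ => (k:ℝ) * r^(k-1)) := by
  have := summable_pow_mul_geometric_of_norm_lt_one 1 (by rwa [Real.norm_eq_abs, abs_of_pos h0] : ‖r‖ < 1)
  have h2 := this.mul_left (1/r)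
  apply h2.congr
  intro n
  cases n with
  | zero => simp
  | succ m => field_simp [pow_succ]; rw [Nat.add_sub_cancel, pow_succ, mul_comm]

lemma summable_deriv {x : ℝ} (hx : |x| < 1) :
    Summable (fun k : ℕ => (k:ℝ) * cb k * x^(k-1)) := by
  obtain ⟨r, hr1, hr2⟩ : ∃ r, |x| < r ∧ r < 1 := exists_between hx
  have hr0 : 0 < r := lt_of_le_of_lt (abs_nonneg x) hr1
  apply Summable.of_norm
  apply Summable.of_nonneg_of_le (fun k => norm_nonneg _) (fun k => ?_) (summable_kr hr0 hr2)
  rw [Real.norm_eq_abs, abs_mul, abs_mul, Nat.abs_cast, abs_of_pos (cb_pos k), abs_pow]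
  calc (k:ℝ) * cb k * |x|^(k-1) ≤ (k:ℝ) * 1 * r^(k-1) := by
        apply mul_le_mul (mul_le_mul le_rfl (cb_le_one k) (le_of_lt (cb_pos k)) (Nat.cast_nonneg k))
          (pow_le_pow_left₀ (abs_nonneg x) hr1.le _) (by positivity) (by positivity)
    _ = (k:ℝ) * r^(k-1) := by ring

lemma hasDerivAt_f {x : ℝ} (hx : |x| < 1) :
    HasDerivAt f (∑' k : ℕ, (k:ℝ) * cb k * x^(k-1)) x := by
  obtain ⟨r, hr1, hr2⟩ : ∃ r, |x| < r ∧ r < 1 := exists_between hx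
  have hr0 : 0 < r := lt_of_le_of_lt (abs_nonneg x) hr1
  have hu : Summable (fun k : ℕ => (k:ℝ) * r^(k-1)) := summable_kr hr0 hr2
  apply hasDerivAt_tsum_of_isPreconnected hu (isOpen_Ioo (a := -r) (b := r))
    (convex_Ioo _ _).isPreconnected
    (g := fun k y => cb k * y^k) (g' := fun k y => (k:ℝ) * cb k * y^(k-1))
    (fun n y _ => ?_) (fun n y hy => ?_) (mem_Ioo.2 ⟨by linarith [neg_abs_le x, abs_nonneg x, hr0], by linarith [le_abs_self x]⟩)
    (summable_f (x := 0) (by simp))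
    (abs_lt.1 hr1 |> fun h => mem_Ioo.2 h)
  · simpa [mul_comm, mul_assoc] using (hasDerivAt_pow n y).const_mul (cb n)
  · rw [Real.norm_eq_abs, abs_mul, abs_mul, Nat.abs_cast, abs_of_pos (cb_pos n), abs_pow]
    have hyr : |y| ≤ r := by
      rcases mem_Ioo.1 hy with ⟨h1, h2⟩; rw [abs_le]; constructor <;> linarith
    calc (n:ℝ) * cb n * |y|^(n-1) ≤ (n:ℝ) * 1 * r^(n-1) := by
          apply mul_le_mul (mul_le_mul le_rfl (cb_le_one n) (le_of_lt (cb_pos n)) (Nat.cast_nonneg n))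
            (pow_le_pow_left₀ (abs_nonneg y) hyr _) (by positivity) (by positivity)
      _ = (n:ℝ) * r^(n-1) := by ring



noncomputable def d (x : ℝ) : ℝ := ∑' k : ℕ, (k:ℝ) * cb k * x^(k-1)

lemma summable_shift {x : ℝ} (hx : |x| < 1) :
    Summable (fun k : ℕ => ((k:ℝ)+1) * cb (k+1) * x^k) := by
  have := (summable_nat_add_iff (f := fun k : ℕ => (k:ℝ) * cb k * x^(k-1)) 1).2 (summable_deriv hx)
  apply this.congr
  intro n
  push_cast
  simp

lemma summable_k {x : ℝ} (hx : |x| < 1) :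
    Summable (fun k : ℕ => (k:ℝ) * cb k * x^k) := by
  have := (summable_deriv hx).mul_left x
  apply this.congr
  intro n
  cases n with
  | zero => simp
  | succ m => show x * (_ * _ * x^m) = _; push_cast; ring

lemma ode {x : ℝ} (hx : |x| < 1) : 2*(1-x) * d x = f x := by
  have hshift : d x = ∑' k : ℕ, ((k:ℝ)+1) * cb (k+1) * x^k := by
    unfold d
    rw [(summable_deriv hx).tsum_eq_zero_add]
    simp
  have hxd : x * d x = ∑' k : ℕ, (k:ℝ) * cb k * x^k := by
    unfold d
    rw [← tsum_mul_left]
    apply tsum_congr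
    intro n
    cases n with
    | zero => simp
    | succ m => show x * (_ * _ * x^m) = _; push_cast; ring
  have key : 2 * d x - 2 * (x * d x)
      = ∑' k : ℕ, (2*((k:ℝ)+1) * cb (k+1) - 2*(k:ℝ) * cb k) * x^k := by
    rw [hxd, hshift, ← tsum_mul_left, ← tsum_mul_left, ← Summable.tsum_sub
      (((summable_shift hx).mul_left 2)) ((summable_k hx).mul_left 2)]
    apply tsum_congr; intro k; ring
  have : 2*(1-x) * d x = 2 * d x - 2 * (x * d x) := by ring
  rw [this, key]
  unfold f
  apply tsum_congr
  intro k
  have := cb_rec k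
  have : 2*((k:ℝ)+1) * cb (k+1) - 2*(k:ℝ) * cb k = cb k := by nlinarith [cb_rec k]
  rw [this]

lemma f_zero : f 0 = 1 := by
  unfold f
  rw [tsum_eq_single 0 (fun k hk => by simp [zero_pow hk])]
  simp [cb_zero]

lemma key_const {x : ℝ} (hx : x ∈ Ico (0:ℝ) 1) : (1-x) * (f x)^2 = 1 := by
  obtain ⟨hx0, hx1⟩ := hx
  have habs : ∀ y ∈ Icc (0:ℝ) x, |y| < 1 := fun y hy => by
    rw [abs_lt]; constructor <;> [linarith [hy.1]; linarith [hy.2]]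
  have hderiv : ∀ y ∈ Ico (0:ℝ) x, HasDerivWithinAt (fun z => (1-z) * (f z)^2) 0 (Ici y) y := by
    intro y hy
    have hy1 : |y| < 1 := habs y ⟨hy.1, hy.2.le⟩
    have hf := hasDerivAt_f hy1
    have h1 : HasDerivAt (fun z => (1-z) * (f z)^2)
        ((-1) * (f y)^2 + (1-y) * (2 * f y ^ (2-1) * d y)) y := by
      exact (((hasDerivAt_id y).const_sub 1)).mul ((hf.pow 2))
    have h0 : (-1) * (f y)^2 + (1-y) * (2 * f y ^ (2-1) * d y) = 0 := by
      norm_num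
      have h2 : (1-y)*(2*f y*d y) = f y * (2*(1-y)*d y) := by ring
      rw [h2, ode hy1]
      ring
    rw [h0] at h1
    exact h1.hasDerivWithinAt
  have hcont : ContinuousOn (fun z => (1-z) * (f z)^2) (Icc 0 x) := by
    intro y hy
    exact (((hasDerivAt_id y).const_sub 1).mul ((hasDerivAt_f (habs y hy)).pow 2)).continuousAt.continuousWithinAt
  have := constant_of_has_deriv_right_zero hcont hderiv x (right_mem_Icc.2 hx0)
  rw [this, f_zero]
  norm_num

lemma f_eq_sqrt {x : ℝ} (hx : x ∈ Ico (0:ℝ) 1) : f x = 1 / Real.sqrt (1-x) := by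
  obtain ⟨hx0, hx1⟩ := hx
  have hkey := key_const ⟨hx0, hx1⟩
  have h1x : 0 < 1 - x := by linarith
  have hfnn : 0 ≤ f x := tsum_nonneg (fun k => mul_nonneg (cb_pos k).le (pow_nonneg hx0 k))
  have hsq : (f x)^2 = 1/(1-x) := by field_simp at hkey ⊢; linarith
  have : f x = Real.sqrt (1/(1-x)) := by
    rw [← hsq, Real.sqrt_sq hfnn]
  rw [this, one_div, Real.sqrt_inv, one_div]

lemma hasSum_genfun {x : ℝ} (hx : x ∈ Ico (0:ℝ) 1) :
    HasSum (fun k => cb k * x^k) (1 / Real.sqrt (1-x)) := by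
  have := (summable_f (x := x) (by rw [abs_of_nonneg hx.1]; exact hx.2)).hasSum
  rwa [show ∑' k, cb k * x^k = 1 / Real.sqrt (1-x) from f_eq_sqrt hx] at this


lemma neg_log_le_rpow {t : ℝ} (h0 : 0 < t) (h1 : t ≤ 1) : -Real.log t ≤ 2 * t ^ (-(1:ℝ)/2) := by
  have hp : (0:ℝ) < t ^ (-(1:ℝ)/2) := Real.rpow_pos_of_pos h0 _
  have h2 := Real.log_le_sub_one_of_pos hp
  rw [Real.log_rpow h0] at h2
  linarith

lemma integrableOn_pow_neg_log (n : ℕ) :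
    IntegrableOn (fun t => t^n * (-Real.log t)) (Ioo (0:ℝ) 1) := by
  have hd : IntegrableOn (fun t : ℝ => 2 * t ^ (-(1:ℝ)/2)) (Ioo (0:ℝ) 1) := by
    have := (intervalIntegrable_rpow' (a := 0) (b := 1) (r := -(1:ℝ)/2) (by norm_num)).1
    exact IntegrableOn.mono_set (s := Ioo (0:ℝ) 1) (t := Ioc (0:ℝ) 1) (this.const_mul 2) Ioo_subset_Ioc_self
  apply Integrable.mono' hd
  · apply AEStronglyMeasurable.restrict
    exact (measurable_id.pow_const n).aestronglyMeasurable.mul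
      (Real.measurable_log.aestronglyMeasurable.neg)
  · filter_upwards [ae_restrict_mem measurableSet_Ioo] with t ht
    obtain ⟨h0, h1⟩ := ht
    rw [Real.norm_eq_abs, abs_mul]
    have hlog : Real.log t ≤ 0 := Real.log_nonpos h0.le h1.le
    rw [abs_of_nonneg (pow_nonneg h0.le n), abs_of_nonneg (by linarith : 0 ≤ -Real.log t)]
    calc t^n * (-Real.log t) ≤ 1 * (-Real.log t) := by
          apply mul_le_mul_of_nonneg_right _ (by linarith)
          exact pow_le_one₀ h0.le h1.le
      _ = -Real.log t := one_mul _
      _ ≤ 2 * t ^ (-(1:ℝ)/2) := neg_log_le_rpow h0 h1.le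

lemma integral_pow_neg_log (n : ℕ) :
    ∫ t in Ioo (0:ℝ) 1, t^n * (-Real.log t) = 1/((n:ℝ)+1)^2 := by
  have hint : IntervalIntegrable (fun t => t^n * (-Real.log t)) volume 0 1 := by
    rw [intervalIntegrable_iff_integrableOn_Ioo_of_le (by norm_num)]
    exact integrableOn_pow_neg_log n
  set F : ℝ → ℝ := fun t => t^(n+1)/((n:ℝ)+1)^2 - t^(n+1) * Real.log t/((n:ℝ)+1) with hF
  have hderiv : ∀ t ∈ Ioo (0:ℝ) 1, HasDerivAt F (t^n * (-Real.log t)) t := by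
    intro t ht
    have h1 : HasDerivAt (fun t : ℝ => t^(n+1)) (((n:ℝ)+1) * t^n) t := by
      simpa using hasDerivAt_pow (n+1) t
    have h2 : HasDerivAt Real.log t⁻¹ t := Real.hasDerivAt_log ht.1.ne'
    have h3 := (h1.mul h2)
    have h4 := (h1.div_const (((n:ℝ)+1)^2)).sub ((h3).div_const ((n:ℝ)+1))
    refine h4.congr_deriv ?_
    have hn : ((n:ℝ)+1) ≠ 0 := by positivity
    rw [pow_succ t n, mul_assoc (t^n), mul_inv_cancel₀ ht.1.ne', mul_one]
    field_simp
    ring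
  have ha : Tendsto F (𝓝[>] (0:ℝ)) (𝓝 0) := by
    have h1 : Tendsto (fun t : ℝ => t^(n+1)/((n:ℝ)+1)^2) (𝓝[>] (0:ℝ)) (𝓝 0) := by
      have := ((continuous_pow (n+1)).tendsto (0:ℝ)).div_const (((n:ℝ)+1)^2)
      simp only [zero_pow (Nat.succ_ne_zero n), zero_div] at this
      exact this.mono_left nhdsWithin_le_nhds
    have h2 : Tendsto (fun t : ℝ => t^(n+1) * Real.log t/((n:ℝ)+1)) (𝓝[>] (0:ℝ)) (𝓝 0) := by
      have hb := tendsto_log_mul_rpow_nhdsGT_zero (r := (n:ℝ)+1) (by positivity)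
      have : Tendsto (fun t : ℝ => t^(n+1) * Real.log t) (𝓝[>] (0:ℝ)) (𝓝 0) := by
        apply hb.congr'
        filter_upwards [self_mem_nhdsWithin] with t (ht : 0 < t)
        rw [← Real.rpow_natCast t (n+1)]
        push_cast
        ring
      simpa using this.div_const ((n:ℝ)+1)
    simpa using h1.sub h2
  have hb : Tendsto F (𝓝[<] (1:ℝ)) (𝓝 (1/((n:ℝ)+1)^2)) := by
    have hc : ContinuousAt F 1 := by
      apply ContinuousAt.sub
      · exact ((continuous_pow (n+1)).continuousAt).div_const _
      · exact (((continuous_pow (n+1)).continuousAt).mul (Real.continuousAt_log one_ne_zero)).div_const _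
    have : F 1 = 1/((n:ℝ)+1)^2 := by simp [hF]
    rw [← this]
    exact hc.continuousWithinAt.tendsto
  have := intervalIntegral.integral_eq_sub_of_hasDerivAt_of_tendsto (by norm_num : (0:ℝ) < 1)
    hderiv hint ha hb
  rw [intervalIntegral.integral_of_le (by norm_num : (0:ℝ) ≤ 1), integral_Ioc_eq_integral_Ioo] at this
  rw [this]
  ring



lemma summable_cb_sq : Summable (fun k : ℕ => cb k * (1/(2*(k:ℝ)+1)^2)) := by
  have h1 : Summable (fun k : ℕ => 1/((k:ℝ)+1)^2) := by
    have := (summable_nat_add_iff (f := fun n : ℕ => 1/(n:ℝ)^2) 1).2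
      ((Real.summable_one_div_nat_pow (p := 2)).2 one_lt_two)
    apply this.congr
    intro n; push_cast; ring
  apply Summable.of_nonneg_of_le (fun k => mul_nonneg (cb_pos k).le (by positivity)) (fun k => ?_) h1
  have hk : ((k:ℝ)+1)^2 ≤ (2*(k:ℝ)+1)^2 := by nlinarith [Nat.cast_nonneg (α := ℝ) k]
  calc cb k * (1/(2*(k:ℝ)+1)^2) ≤ 1 * (1/((k:ℝ)+1)^2) := by
        apply mul_le_mul (cb_le_one k) _ (by positivity) zero_le_one
        apply one_div_le_one_div_of_le (by positivity) hk
    _ = 1/((k:ℝ)+1)^2 := one_mul _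

lemma sum_eq_integral :
    ∑' k : ℕ, cb k * (1/(2*(k:ℝ)+1)^2)
      = ∫ t in Ioo (0:ℝ) 1, (-Real.log t) / Real.sqrt (1 - t^2) := by
  set F : ℕ → ℝ → ℝ := fun k t => cb k * (t^(2*k) * (-Real.log t)) with hF
  have hint : ∀ k, Integrable (F k) (volume.restrict (Ioo (0:ℝ) 1)) :=
    fun k => (integrableOn_pow_neg_log (2*k)).const_mul (cb k)
  have hval : ∀ k, ∫ t in Ioo (0:ℝ) 1, F k t = cb k * (1/(2*(k:ℝ)+1)^2) := by
    intro k
    rw [hF]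
    simp only
    rw [MeasureTheory.integral_const_mul, integral_pow_neg_log (2*k)]
    push_cast
    ring
  have hnorm : ∀ k, ∫ t in Ioo (0:ℝ) 1, ‖F k t‖ = cb k * (1/(2*(k:ℝ)+1)^2) := by
    intro k
    rw [← hval k]
    apply MeasureTheory.integral_congr_ae
    filter_upwards [ae_restrict_mem measurableSet_Ioo] with t ht
    rw [Real.norm_eq_abs, abs_of_nonneg]
    have h1 := Real.log_nonpos ht.1.le ht.2.le
    exact mul_nonneg (cb_pos k).le (mul_nonneg (pow_nonneg ht.1.le (2*k)) (by linarith))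
  have hsum : Summable fun k => ∫ t in Ioo (0:ℝ) 1, ‖F k t‖ := by
    simp_rw [hnorm]; exact summable_cb_sq
  have key := MeasureTheory.integral_tsum_of_summable_integral_norm hint hsum
  simp_rw [hval] at key
  rw [key]
  apply MeasureTheory.integral_congr_ae
  filter_upwards [ae_restrict_mem measurableSet_Ioo] with t ht
  have ht2 : t^2 ∈ Ico (0:ℝ) 1 := ⟨sq_nonneg t, by nlinarith [ht.1, ht.2]⟩
  have hgen := (hasSum_genfun ht2).mul_right (-Real.log t)
  rw [show (fun k => F k t) = fun k => cb k * (t^2)^k * (-Real.log t) from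
    funext fun k => by simp only [hF, pow_mul]; ring, hgen.tsum_eq]
  ring


lemma sin_image : Real.sin '' Ioo 0 (π/2) = Ioo (0:ℝ) 1 := by
  ext y
  constructor
  · rintro ⟨θ, hθ, rfl⟩
    refine ⟨Real.sin_pos_of_pos_of_lt_pi hθ.1 (by linarith [hθ.2, Real.pi_pos]), ?_⟩
    calc Real.sin θ < Real.sin (π/2) := by
          apply Real.strictMonoOn_sin ⟨by linarith [hθ.1, Real.pi_pos], hθ.2.le⟩
            ⟨by linarith [Real.pi_pos], le_refl _⟩ hθ.2
      _ = 1 := Real.sin_pi_div_two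
  · rintro ⟨h0, h1⟩
    exact ⟨Real.arcsin y, ⟨Real.arcsin_pos.2 h0, Real.arcsin_lt_pi_div_two.2 h1⟩,
      Real.sin_arcsin (by linarith) (by linarith)⟩

lemma injOn_sin_Ioo : Set.InjOn Real.sin (Ioo 0 (π/2)) :=
  Real.injOn_sin.mono (fun x hx => mem_Icc.2 ⟨by linarith [(mem_Ioo.1 hx).1, Real.pi_pos], (mem_Ioo.1 hx).2.le⟩)

lemma hasDW : ∀ θ ∈ Ioo (0:ℝ) (π/2), HasDerivWithinAt Real.sin (Real.cos θ) (Ioo 0 (π/2)) θ :=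
  fun θ _ => (Real.hasDerivAt_sin θ).hasDerivWithinAt

lemma subst_sin :
    ∫ t in Ioo (0:ℝ) 1, (-Real.log t) / Real.sqrt (1 - t^2)
      = ∫ θ in Ioo (0:ℝ) (π/2), -Real.log (Real.sin θ) := by
  rw [← sin_image, integral_image_eq_integral_abs_deriv_smul measurableSet_Ioo hasDW injOn_sin_Ioo]
  apply MeasureTheory.integral_congr_ae
  filter_upwards [ae_restrict_mem measurableSet_Ioo] with θ hθ
  have hcos : 0 < Real.cos θ := Real.cos_pos_of_mem_Ioo ⟨by linarith [hθ.1, Real.pi_pos], hθ.2⟩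
  have hsq : Real.sqrt (1 - Real.sin θ^2) = Real.cos θ := by
    rw [show 1 - Real.sin θ^2 = Real.cos θ^2 from by
      have := Real.sin_sq_add_cos_sq θ; linarith, Real.sqrt_sq hcos.le]
  rw [smul_eq_mul, hsq, abs_of_pos hcos]
  field_simp

noncomputable def Ils : ℝ := ∫ θ in Ioo (0:ℝ) (π/2), Real.log (Real.sin θ)



lemma integrable_neg_log_Ioo {b : ℝ} (hb : 1 ≤ b) :
    IntegrableOn (fun t : ℝ => -Real.log t) (Ioo 0 b) := by
  have h1 : IntegrableOn (fun t : ℝ => -Real.log t) (Ioo 0 1) := by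
    have := integrableOn_pow_neg_log 0
    simpa using this
  have h2 : IntegrableOn (fun t : ℝ => -Real.log t) (Icc 1 b) :=
    (Real.continuousOn_log.mono (fun x hx => by
      simp only [mem_compl_iff, mem_singleton_iff]; intro h; rw [h] at hx; exact absurd hx.1 (by norm_num))).neg.integrableOn_Icc
  exact (h1.union h2).mono_set (fun x hx =>
    if hx1 : x < 1 then Or.inl ⟨hx.1, hx1⟩ else Or.inr ⟨not_lt.1 hx1, hx.2.le⟩)

lemma integrableOn_log_sin : IntegrableOn (fun θ => Real.log (Real.sin θ)) (Ioo 0 (π/2)) := by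
  have hpi := Real.pi_pos
  have hbound : IntegrableOn (fun θ : ℝ => -Real.log θ + Real.log (π/2)) (Ioo 0 (π/2)) :=
    (integrable_neg_log_Ioo (by linarith [Real.pi_gt_three])).add
      (integrableOn_const measure_Ioo_lt_top.ne)
  apply Integrable.mono' hbound
  · exact ((Real.measurable_log.comp Real.measurable_sin).aestronglyMeasurable).restrict
  · filter_upwards [ae_restrict_mem measurableSet_Ioo] with θ hθ
    have hs0 : 0 < Real.sin θ := Real.sin_pos_of_pos_of_lt_pi hθ.1 (by linarith [hθ.2])
    have hs1 : Real.sin θ ≤ 1 := Real.sin_le_one θ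
    have hlb : 2/π * θ ≤ Real.sin θ := Real.mul_le_sin hθ.1.le hθ.2.le
    have h2pi : (0:ℝ) < 2/π := div_pos two_pos hpi
    have hlog : Real.log (2/π * θ) ≤ Real.log (Real.sin θ) :=
      Real.log_le_log (mul_pos h2pi hθ.1) hlb
    rw [Real.log_mul h2pi.ne' hθ.1.ne', Real.log_div (by norm_num) hpi.ne'] at hlog
    rw [Real.norm_eq_abs, abs_of_nonpos (Real.log_nonpos hs0.le hs1)]
    have : Real.log (π/2) = Real.log π - Real.log 2 := Real.log_div hpi.ne' (by norm_num)
    linarith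





lemma hasDW_const_sub (a : ℝ) (s : Set ℝ) : ∀ θ ∈ s, HasDerivWithinAt (fun x => a - x) (-1) s θ :=
  fun θ _ => ((hasDerivAt_id θ).const_sub a).hasDerivWithinAt

lemma injOn_const_sub (a : ℝ) (s : Set ℝ) : Set.InjOn (fun x => a - x) s :=
  fun x _ y _ h => by simpa using h

-- log cos over Ioo 0 (π/2)
lemma log_cos_eq : ∫ θ in Ioo (0:ℝ) (π/2), Real.log (Real.cos θ) = Ils := by
  have himg : (fun x => π/2 - x) '' Ioo (0:ℝ) (π/2) = Ioo (0:ℝ) (π/2) := by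
    rw [image_const_sub_Ioo]; congr 1 <;> ring
  have := integral_image_eq_integral_abs_deriv_smul (s := Ioo (0:ℝ) (π/2)) measurableSet_Ioo
    (hasDW_const_sub (π/2) _) (injOn_const_sub (π/2) _) (fun x => Real.log (Real.sin x))
  rw [himg] at this
  rw [Ils, this]
  apply MeasureTheory.integral_congr_ae
  filter_upwards [] with θ
  rw [smul_eq_mul, Real.sin_pi_div_two_sub]
  norm_num

lemma integrableOn_log_cos : IntegrableOn (fun θ => Real.log (Real.cos θ)) (Ioo 0 (π/2)) := by
  have himg : (fun x => π/2 - x) '' Ioo (0:ℝ) (π/2) = Ioo (0:ℝ) (π/2) := by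
    rw [image_const_sub_Ioo]; congr 1 <;> ring
  have := (integrableOn_image_iff_integrableOn_abs_deriv_smul (s := Ioo (0:ℝ) (π/2)) measurableSet_Ioo
    (hasDW_const_sub (π/2) _) (injOn_const_sub (π/2) _) (fun x => Real.log (Real.sin x)))
  rw [himg] at this
  have h2 := this.1 integrableOn_log_sin
  apply h2.congr
  filter_upwards [ae_restrict_mem measurableSet_Ioo] with θ _
  rw [smul_eq_mul, Real.sin_pi_div_two_sub]
  norm_num

-- second half
lemma log_sin_second_half :
    (∫ θ in Ioo (π/2) π, Real.log (Real.sin θ)) = Ils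
    ∧ IntegrableOn (fun θ => Real.log (Real.sin θ)) (Ioo (π/2) π) := by
  have himg : (fun x => π - x) '' Ioo (0:ℝ) (π/2) = Ioo (π/2) π := by
    rw [image_const_sub_Ioo]; congr 1 <;> ring
  have heq := integral_image_eq_integral_abs_deriv_smul (s := Ioo (0:ℝ) (π/2)) measurableSet_Ioo
    (hasDW_const_sub π _) (injOn_const_sub π _) (fun x => Real.log (Real.sin x))
  have hii := integrableOn_image_iff_integrableOn_abs_deriv_smul (s := Ioo (0:ℝ) (π/2)) measurableSet_Ioo
    (hasDW_const_sub π _) (injOn_const_sub π _) (fun x => Real.log (Real.sin x))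
  rw [himg] at heq hii
  have hsimp : ∀ θ : ℝ, |(-1:ℝ)| • Real.log (Real.sin (π - θ)) = Real.log (Real.sin θ) := by
    intro θ; rw [smul_eq_mul, Real.sin_pi_sub]; norm_num
  constructor
  · rw [heq, Ils]
    apply MeasureTheory.integral_congr_ae
    filter_upwards [] with θ
    exact (hsimp θ).symm ▸ rfl
  · apply hii.2
    apply integrableOn_log_sin.congr
    filter_upwards [] with θ
    exact (hsimp θ).symm

lemma double_image : (fun x : ℝ => 2*x) '' Ioo (0:ℝ) (π/2) = Ioo 0 π := by
  ext y
  constructor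
  · rintro ⟨u, hu, rfl⟩
    simp only [mem_Ioo] at hu ⊢
    constructor <;> [linarith [hu.1]; linarith [hu.2]]
  · rintro ⟨h0, h1⟩
    exact ⟨y/2, mem_Ioo.2 ⟨by linarith, by linarith⟩, by ring⟩

lemma hasDW_double : ∀ θ ∈ Ioo (0:ℝ) (π/2), HasDerivWithinAt (fun x : ℝ => 2*x) 2 (Ioo (0:ℝ) (π/2)) θ :=
  fun θ _ => by simpa using ((hasDerivAt_id θ).const_mul (2:ℝ)).hasDerivWithinAt

lemma injOn_double : Set.InjOn (fun x : ℝ => 2*x) (Ioo (0:ℝ) (π/2)) :=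
  fun x _ y _ h => by simpa using h

lemma J_eq_two_I : ∫ θ in Ioo (0:ℝ) π, Real.log (Real.sin θ) = 2 * Ils := by
  have hsplit : Ioc (0:ℝ) (π/2) ∪ Ioo (π/2) π = Ioo 0 π :=
    Set.Ioc_union_Ioo_eq_Ioo (by positivity) (by linarith [Real.pi_pos])
  have hdisj : Disjoint (Ioc (0:ℝ) (π/2)) (Ioo (π/2) π) := by
    rw [Set.disjoint_left]; rintro x ⟨_, h2⟩ ⟨h3, _⟩; linarith
  have hi1 : IntegrableOn (fun θ => Real.log (Real.sin θ)) (Ioc (0:ℝ) (π/2)) := by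
    rw [integrableOn_Ioc_iff_integrableOn_Ioo]; exact integrableOn_log_sin
  have hi2 := log_sin_second_half.2
  rw [← hsplit, setIntegral_union hdisj measurableSet_Ioo hi1 hi2,
    integral_Ioc_eq_integral_Ioo, log_sin_second_half.1]
  show Ils + Ils = 2 * Ils
  ring

lemma Ils_value : Ils = -(π/2) * Real.log 2 := by
  have hpi := Real.pi_pos
  have heq := integral_image_eq_integral_abs_deriv_smul (s := Ioo (0:ℝ) (π/2)) measurableSet_Ioo
    hasDW_double injOn_double (fun x => Real.log (Real.sin x))
  rw [double_image] at heq
  rw [J_eq_two_I] at heq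
  have hsum : ∀ θ ∈ Ioo (0:ℝ) (π/2),
      |(2:ℝ)| • Real.log (Real.sin (2*θ)) = 2 * (Real.log 2 + Real.log (Real.sin θ) + Real.log (Real.cos θ)) := by
    intro θ hθ
    have hs : 0 < Real.sin θ := Real.sin_pos_of_pos_of_lt_pi hθ.1 (by linarith [hθ.2])
    have hc : 0 < Real.cos θ := Real.cos_pos_of_mem_Ioo ⟨by linarith [hθ.1], hθ.2⟩
    rw [smul_eq_mul, Real.sin_two_mul, Real.log_mul (by positivity) hc.ne',
      Real.log_mul (by norm_num) hs.ne']
    norm_num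
  have hconst : IntegrableOn (fun _ : ℝ => Real.log 2) (Ioo (0:ℝ) (π/2)) :=
    integrableOn_const measure_Ioo_lt_top.ne
  have hfg : Integrable (fun θ : ℝ => Real.log 2 + Real.log (Real.sin θ))
      (volume.restrict (Ioo (0:ℝ) (π/2))) := by exact hconst.add integrableOn_log_sin
  have heq2 : (∫ θ in Ioo (0:ℝ) (π/2), |(2:ℝ)| • Real.log (Real.sin (2*θ)))
      = 2 * ((π/2) * Real.log 2 + Ils + Ils) := by
    rw [show (∫ θ in Ioo (0:ℝ) (π/2), |(2:ℝ)| • Real.log (Real.sin (2*θ)))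
        = ∫ θ in Ioo (0:ℝ) (π/2), 2 * (Real.log 2 + Real.log (Real.sin θ) + Real.log (Real.cos θ)) from by
      apply MeasureTheory.integral_congr_ae
      filter_upwards [ae_restrict_mem measurableSet_Ioo] with θ hθ
      exact hsum θ hθ]
    rw [MeasureTheory.integral_const_mul, integral_add hfg integrableOn_log_cos,
      integral_add hconst integrableOn_log_sin,
      setIntegral_const, log_cos_eq]
    show 2 * ((volume (Ioo (0:ℝ) (π/2))).toReal * Real.log 2 + Ils + Ils) = _
    rw [Real.volume_Ioo, ENNReal.toReal_ofReal (by linarith)]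
    norm_num
  rw [heq2] at heq
  linarith

theorem stmt_8 : ∑' k : ℕ, (1/(2*((k:ℝ)+1)+1)^2) * cb (k+1)
    = (Real.pi/2) * Real.log 2 - 1 := by
  have htot : ∑' k : ℕ, cb k * (1/(2*(k:ℝ)+1)^2) = (π/2) * Real.log 2 := by
    rw [sum_eq_integral, subst_sin]
    have : ∫ θ in Ioo (0:ℝ) (π/2), -Real.log (Real.sin θ) = -Ils := by
      rw [Ils, ← MeasureTheory.integral_neg]
    rw [this, Ils_value]
    ring
  have hshift := summable_cb_sq.tsum_eq_zero_add
  rw [htot] at hshift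
  have hterm : ∀ k : ℕ, cb (k+1) * (1/(2*((k+1:ℕ):ℝ)+1)^2)
      = (1/(2*((k:ℝ)+1)+1)^2) * cb (k+1) := by
    intro k; push_cast; ring
  rw [cb_zero] at hshift
  norm_num at hshift
  rw [show (∑' k : ℕ, (1/(2*((k:ℝ)+1)+1)^2) * cb (k+1))
      = ∑' k : ℕ, cb (k+1) * (1/(2*((k+1:ℕ):ℝ)+1)^2) from tsum_congr (fun k => (hterm k).symm)]
  push_cast at hshift ⊢
  simp only [one_div] at hshift ⊢
  linarith
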